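/- arXiv:2012.10896 — 4 statements merged into one kernel-verified Lean document; each statement's English description precedes it below -/
import Mathlib

section
/- Let μ_{n,s} = E[N_n^s] where N_n is the number of cycles of a uniformly random permutation of {1,...,n}, with convention μ_{0,s} = 0. Then for all integers n, s ≥ 1, μ_{n,s} = 1 + (1/n) · Σ_{r=1}^{s} Σ_{j=1}^{n-1} C(s,r) · μ_{j,r}, where C(s,r) is the binomial coefficient. -/
open scoped Classical

/-- The number of cycles of a permutation of `Fin n`, counting fixed points
as cycles of length one. -/
noncomputable def numCycles {n : ℕ} (π : Equiv.Perm (Fin n)) : ℕ :=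
  π.cycleType.card + (n - π.support.card)

/-- `μ_{n,s}`: the `s`-th moment of the number of cycles of a uniformly random
permutation of `Fin n` (for `n = 0` this is `0` when `s ≥ 1`). -/
noncomputable def cycMoment (n s : ℕ) : ℝ :=
  (∑ π : Equiv.Perm (Fin n), ((numCycles π : ℝ)) ^ s) / (n.factorial : ℝ)

open Equiv Equiv.Perm Finset

section PermLemmas

variable {α : Type*} [DecidableEq α] [Fintype α]

lemma support_swap_mul_eq' (g : Perm α) {a b : α} (ha : g a = a) (hab : a ≠ b) :
    (Equiv.swap a b * g).support = insert a (insert b g.support) := by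
  ext x
  simp only [Finset.mem_insert, Equiv.Perm.mem_support, Equiv.Perm.mul_apply]
  constructor
  · intro h
    by_cases hxa : x = a
    · exact Or.inl hxa
    by_cases hxb : x = b
    · exact Or.inr (Or.inl hxb)
    refine Or.inr (Or.inr fun hgx => ?_)
    rw [hgx] at h
    exact h (Equiv.swap_apply_of_ne_of_ne hxa hxb)
  · rintro (h | h | h)
    · rw [h, ha, Equiv.swap_apply_left]
      exact Ne.symm hab
    · rw [h]
      by_cases hgb : g b = b
      · rw [hgb, Equiv.swap_apply_right]
        exact hab
      · have hgba : g b ≠ a := fun hh => hab ((g.injective (hh.trans ha.symm)).symm)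
        rw [Equiv.swap_apply_of_ne_of_ne hgba hgb]
        exact hgb
    · by_cases hxa : x = a
      · subst hxa; exact absurd ha h
      have hgxa : g x ≠ a := fun hh => hxa (g.injective (hh.trans ha.symm))
      by_cases hgxb : g x = b
      · rw [hgxb, Equiv.swap_apply_right]
        exact fun hh => hxa hh.symm
      · rw [Equiv.swap_apply_of_ne_of_ne hgxa hgxb]
        exact h

lemma isCycle_swap_mul' {c : Perm α} (hc : c.IsCycle) {a b : α}
    (ha : c a = a) (hb : c b ≠ b) : (Equiv.swap a b * c).IsCycle := by
  have hab : a ≠ b := fun h => hb (h ▸ ha)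
  have hcb_ne_a : c b ≠ a := fun hh => hab (c.injective (ha.trans hh.symm))
  have hπb : (Equiv.swap a b * c) b ≠ b := by
    rw [Perm.mul_apply, Equiv.swap_apply_of_ne_of_ne hcb_ne_a hb]
    exact hb
  have hanotin : a ∉ c.support := Equiv.Perm.notMem_support.mpr ha
  have key : ∀ i : ℕ, (Equiv.swap a b * c).SameCycle b ((c ^ i) b) := by
    intro i
    induction i with
    | zero => simpa using Equiv.Perm.SameCycle.refl _ b
    | succ i ih =>
      have hmem : (c ^ i) b ∈ c.support :=
        Equiv.Perm.pow_apply_mem_support.mpr (Equiv.Perm.mem_support.mpr hb)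
      have hcy_mem : c ((c ^ i) b) ∈ c.support :=
        Equiv.Perm.apply_mem_support.mpr hmem
      have hcy_ne_a : c ((c ^ i) b) ≠ a := fun hh => hanotin (hh ▸ hcy_mem)
      have hstep : (c ^ (i + 1)) b = c ((c ^ i) b) := by
        rw [pow_succ' c i]; rfl
      by_cases hcyb : c ((c ^ i) b) = b
      · rw [hstep, hcyb]
      · have hπy : (Equiv.swap a b * c) ((c ^ i) b) = c ((c ^ i) b) := by
          rw [Perm.mul_apply, Equiv.swap_apply_of_ne_of_ne hcy_ne_a hcyb]
        refine ih.trans ⟨1, ?_⟩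
        rw [hstep, zpow_one, hπy]
  refine ⟨b, hπb, fun y hy => ?_⟩
  have hy' : y ∈ (Equiv.swap a b * c).support := Equiv.Perm.mem_support.mpr hy
  rw [support_swap_mul_eq' c ha hab] at hy'
  simp only [Finset.mem_insert] at hy'
  rcases hy' with h | h | hy'
  · rw [h]
    have hya : (Equiv.swap a b * c) a = b := by
      rw [Perm.mul_apply, ha, Equiv.swap_apply_left]
    exact (Equiv.Perm.SameCycle.symm ⟨1, by rw [zpow_one, hya]⟩)
  · rw [h]
  · obtain ⟨i, _, hi⟩ :=
      (hc.sameCycle hb (Equiv.Perm.mem_support.mp hy')).exists_pow_eq'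
    rw [← hi]
    exact key i

lemma numCycles_aux (g : Perm α) {a b : α} (ha : g a = a) (hab : a ≠ b) :
    (Equiv.swap a b * g).cycleType.card +
        (Fintype.card α - (Equiv.swap a b * g).support.card) + 1
      = g.cycleType.card + (Fintype.card α - g.support.card) := by
  have hanotin : a ∉ g.support := Equiv.Perm.notMem_support.mpr ha
  have hsupp := support_swap_mul_eq' g ha hab
  have hsuple : (Equiv.swap a b * g).support.card ≤ Fintype.card α :=
    Finset.card_le_univ _
  by_cases hgb : g b = b
  · -- disjoint case
    have hbnotin : b ∉ g.support := Equiv.Perm.notMem_support.mpr hgb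
    have hdisj : Equiv.Perm.Disjoint (Equiv.swap a b) g := by
      intro x
      by_cases hxa : x = a
      · exact Or.inr (hxa ▸ ha)
      by_cases hxb : x = b
      · exact Or.inr (hxb ▸ hgb)
      · exact Or.inl (Equiv.swap_apply_of_ne_of_ne hxa hxb)
    have hct : (Equiv.swap a b * g).cycleType = (Equiv.swap a b).cycleType + g.cycleType :=
      Equiv.Perm.Disjoint.cycleType_mul hdisj
    have hswapct : (Equiv.swap a b).cycleType.card = 1 := by
      rw [(Equiv.Perm.isCycle_swap hab).cycleType]
      simp
    have hanotin2 : a ∉ insert b g.support := by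
      simp only [Finset.mem_insert]
      rintro (h | h)
      · exact hab h
      · exact hanotin h
    have hcard : (Equiv.swap a b * g).support.card = g.support.card + 2 := by
      rw [hsupp, Finset.card_insert_of_notMem hanotin2,
        Finset.card_insert_of_notMem hbnotin]
    rw [hct, Multiset.card_add, hswapct, hcard]
    rw [hcard] at hsuple
    omega
  · -- merge case
    have hbmem : b ∈ g.support := Equiv.Perm.mem_support.mpr hgb
    set c := g.cycleOf b with hcdef
    have hcmem : c ∈ g.cycleFactorsFinset :=
      Equiv.Perm.cycleOf_mem_cycleFactorsFinset_iff.mpr hbmem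
    have hccycle : c.IsCycle := (Equiv.Perm.mem_cycleFactorsFinset_iff.mp hcmem).1
    set τ := g * c⁻¹ with hτdef
    have hdisj : Equiv.Perm.Disjoint τ c :=
      Equiv.Perm.disjoint_mul_inv_of_mem_cycleFactorsFinset hcmem
    have hgdecomp : g = τ * c := by rw [hτdef, inv_mul_cancel_right]
    have hbc : b ∈ c.support := by
      rw [Equiv.Perm.mem_support, hcdef, Equiv.Perm.cycleOf_apply_self]
      exact hgb
    have hcsub : c.support ⊆ g.support :=
      Equiv.Perm.mem_cycleFactorsFinset_support_le hcmem
    have hac : c a = a := by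
      by_contra h
      exact hanotin (hcsub (Equiv.Perm.mem_support.mpr h))
    have hτsub : τ.support ⊆ g.support := by
      intro x hx
      rcases hdisj x with h | h
      · exact absurd h (Equiv.Perm.mem_support.mp hx)
      · rw [Equiv.Perm.mem_support]
        have := Equiv.Perm.mem_support.mp hx
        rw [hgdecomp, Perm.mul_apply, h]
        exact this
    have hτa : a ∉ τ.support := fun h => hanotin (hτsub h)
    have hmerge : (Equiv.swap a b * c).IsCycle :=
      isCycle_swap_mul' hccycle hac (Equiv.Perm.mem_support.mp hbc)
    have hmsupp : (Equiv.swap a b * c).support = insert a (insert b c.support) :=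
      support_swap_mul_eq' c hac hab
    have hdisj2 : Equiv.Perm.Disjoint (Equiv.swap a b * c) τ := by
      rw [Equiv.Perm.disjoint_iff_disjoint_support, hmsupp]
      rw [Finset.insert_eq_of_mem hbc]
      rw [Finset.disjoint_insert_left]
      exact ⟨hτa, (Equiv.Perm.Disjoint.disjoint_support hdisj).symm⟩
    have hπeq : Equiv.swap a b * g = Equiv.swap a b * c * τ := by
      rw [hgdecomp, (Equiv.Perm.Disjoint.commute hdisj).eq, mul_assoc]
    have hctπ : (Equiv.swap a b * g).cycleType.card = τ.cycleType.card + 1 := by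
      rw [hπeq, Equiv.Perm.Disjoint.cycleType_mul hdisj2, hmerge.cycleType, Multiset.card_add]
      simp [add_comm]
    have hctg : g.cycleType.card = τ.cycleType.card + 1 := by
      rw [hgdecomp, Equiv.Perm.Disjoint.cycleType_mul hdisj, Multiset.card_add, hccycle.cycleType]
      simp [add_comm]
    have hcard : (Equiv.swap a b * g).support.card = g.support.card + 1 := by
      rw [hsupp, Finset.insert_eq_of_mem hbmem, Finset.card_insert_of_notMem hanotin]
    rw [hctπ, hctg, hcard]
    have hgle : g.support.card + 1 ≤ Fintype.card α := by
      rw [← hcard]; exact hsuple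
    omega

end PermLemmas

/-- The equivalence `Fin n ≃ {x : Fin (n+1) // x ≠ 0}` given by `succ`. -/
def succEquiv (n : ℕ) : Fin n ≃ {x : Fin (n + 1) // x ≠ 0} where
  toFun i := ⟨i.succ, Fin.succ_ne_zero i⟩
  invFun x := (x : Fin (n + 1)).pred x.2
  left_inv i := by simp
  right_inv x := by simp

lemma decomposeFin_symm_eq {n : ℕ} (p : Fin (n + 1)) (e : Perm (Fin n)) :
    Equiv.Perm.decomposeFin.symm (p, e)
      = Equiv.swap 0 p * e.extendDomain (succEquiv n) := by
  ext x
  refine Fin.cases ?_ (fun i => ?_) x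
  · rw [Equiv.Perm.decomposeFin_symm_apply_zero, Perm.mul_apply,
      Perm.extendDomain_apply_not_subtype _ _ (by simp), Equiv.swap_apply_left]
  · rw [Equiv.Perm.decomposeFin_symm_apply_succ, Perm.mul_apply]
    congr 1

lemma numCycles_decomposeFin {n : ℕ} (p : Fin (n + 1)) (e : Perm (Fin n)) :
    numCycles (Equiv.Perm.decomposeFin.symm (p, e))
      = numCycles e + (if p = 0 then 1 else 0) := by
  have hk : e.support.card ≤ n := by
    simpa using (Finset.card_le_univ e.support)
  have hct : (e.extendDomain (succEquiv n)).cycleType = e.cycleType :=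
    Equiv.Perm.cycleType_extendDomain (succEquiv n)
  have hsc : (e.extendDomain (succEquiv n)).support.card = e.support.card :=
    Equiv.Perm.card_support_extend_domain (succEquiv n)
  have h0 : (e.extendDomain (succEquiv n)) 0 = 0 :=
    Perm.extendDomain_apply_not_subtype _ _ (by simp)
  rw [decomposeFin_symm_eq]
  by_cases hp : p = 0
  · subst hp
    rw [if_pos rfl, Equiv.swap_self,
      show (Equiv.refl (Fin (n + 1)) : Perm (Fin (n + 1))) = 1 from rfl, one_mul]
    unfold numCycles
    rw [hct, hsc]
    omega
  · rw [if_neg hp]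
    have haux := numCycles_aux (e.extendDomain (succEquiv n)) h0 (Ne.symm hp)
    unfold numCycles
    rw [Fintype.card_fin] at haux
    rw [hct, hsc] at haux
    omega

lemma sum_numCycles_pow (n s : ℕ) :
    ∑ π : Perm (Fin (n + 1)), ((numCycles π : ℝ)) ^ s
      = ∑ σ : Perm (Fin n),
          (((numCycles σ : ℝ) + 1) ^ s + n * (numCycles σ : ℝ) ^ s) := by
  rw [← Equiv.sum_comp (Equiv.Perm.decomposeFin.symm :
      Fin (n + 1) × Perm (Fin n) ≃ Perm (Fin (n + 1)))
      (fun π => ((numCycles π : ℝ)) ^ s)]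
  rw [Fintype.sum_prod_type]
  rw [Fin.sum_univ_succ]
  have h0 : ∀ e : Perm (Fin n),
      ((numCycles (Equiv.Perm.decomposeFin.symm ((0 : Fin (n+1)), e)) : ℝ)) ^ s
        = ((numCycles e : ℝ) + 1) ^ s := by
    intro e
    rw [numCycles_decomposeFin]
    norm_num
  have h1 : ∀ (i : Fin n) (e : Perm (Fin n)),
      ((numCycles (Equiv.Perm.decomposeFin.symm ((i.succ : Fin (n+1)), e)) : ℝ)) ^ s
        = ((numCycles e : ℝ)) ^ s := by
    intro i e
    rw [numCycles_decomposeFin, if_neg (Fin.succ_ne_zero i)]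
    norm_num
  rw [Finset.sum_congr rfl fun e _ => h0 e]
  have : ∀ i : Fin n, ∑ e : Perm (Fin n),
      ((numCycles (Equiv.Perm.decomposeFin.symm ((i.succ : Fin (n+1)), e)) : ℝ)) ^ s
        = ∑ e : Perm (Fin n), ((numCycles e : ℝ)) ^ s := by
    intro i
    exact Finset.sum_congr rfl fun e _ => h1 i e
  rw [Finset.sum_congr rfl fun i _ => this i]
  rw [Finset.sum_add_distrib, ← Finset.mul_sum]
  rw [Finset.sum_const, Finset.card_univ, Fintype.card_fin, nsmul_eq_mul]

lemma cycMoment_zero_right (n : ℕ) : cycMoment n 0 = 1 := by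
  unfold cycMoment
  simp only [pow_zero, Finset.sum_const, Finset.card_univ, nsmul_eq_mul, mul_one]
  rw [Fintype.card_perm, Fintype.card_fin]
  exact div_self (by exact_mod_cast Nat.factorial_ne_zero n)


lemma cycMoment_step (n s : ℕ) :
    ((n : ℝ) + 1) * cycMoment (n + 1) s
      = (∑ r ∈ Finset.range (s + 1), (s.choose r : ℝ) * cycMoment n r)
        + n * cycMoment n s := by
  have hfne : (n.factorial : ℝ) ≠ 0 := by exact_mod_cast Nat.factorial_ne_zero n
  have hn1 : ((n : ℝ) + 1) ≠ 0 := by positivity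
  have hS2 : ∑ π : Perm (Fin (n + 1)), ((numCycles π : ℝ)) ^ s
      = (∑ r ∈ Finset.range (s + 1),
          (s.choose r : ℝ) * ∑ σ : Perm (Fin n), ((numCycles σ : ℝ)) ^ r)
        + n * ∑ σ : Perm (Fin n), ((numCycles σ : ℝ)) ^ s := by
    rw [sum_numCycles_pow n s, Finset.sum_add_distrib]
    congr 1
    · rw [Finset.sum_congr rfl fun σ _ => add_pow (numCycles σ : ℝ) 1 s, Finset.sum_comm]
      refine Finset.sum_congr rfl fun r _ => ?_
      simp only [one_pow, mul_one]
      rw [← Finset.sum_mul, mul_comm]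
    · rw [← Finset.mul_sum]
  have hmom : ∀ r, cycMoment n r
      = (∑ σ : Perm (Fin n), ((numCycles σ : ℝ)) ^ r) / (n.factorial : ℝ) := fun r => rfl
  have hmain : ((n : ℝ) + 1) * cycMoment (n + 1) s
      = (∑ π : Perm (Fin (n + 1)), ((numCycles π : ℝ)) ^ s) / (n.factorial : ℝ) := by
    unfold cycMoment
    rw [Nat.factorial_succ]
    push_cast
    field_simp
  rw [hmain, hS2, add_div, Finset.sum_div]
  congr 1
  · exact Finset.sum_congr rfl fun r _ => by rw [hmom, mul_div_assoc]
  · rw [hmom, mul_div_assoc]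

lemma cycMoment_one (s : ℕ) : cycMoment 1 s = 1 := by
  have hall : ∀ π : Perm (Fin 1), numCycles π = 1 := by
    intro π
    have hπ : π = 1 := Equiv.ext fun x => Subsingleton.elim _ _
    subst hπ
    unfold numCycles
    simp
  simp [cycMoment, hall, Fintype.card_perm]

lemma cycMoment_cumulative (s : ℕ) : ∀ n : ℕ, 1 ≤ n →
    (n : ℝ) * cycMoment n s
      = n + ∑ r ∈ Finset.Icc 1 s, ∑ j ∈ Finset.Icc 1 (n - 1),
          (s.choose r : ℝ) * cycMoment j r := by
  intro n
  induction n with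
  | zero => omega
  | succ m ih =>
    intro _
    rcases Nat.eq_zero_or_pos m with rfl | hm
    · have hempty : Finset.Icc 1 (0 + 1 - 1) = (∅ : Finset ℕ) := rfl
      rw [hempty]
      simp [cycMoment_one]
    · obtain ⟨k, rfl⟩ := Nat.exists_eq_succ_of_ne_zero (by omega : m ≠ 0)
      have hIH := ih (by omega)
      have hstep := cycMoment_step (k + 1) s
      have hsplit : ∑ r ∈ Finset.range (s + 1), (s.choose r : ℝ) * cycMoment (k + 1) r
          = 1 + ∑ r ∈ Finset.Icc 1 s, (s.choose r : ℝ) * cycMoment (k + 1) r := by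
        rw [Finset.range_eq_Ico, Finset.sum_eq_sum_Ico_succ_bot (by omega)]
        rw [Finset.Ico_add_one_right_eq_Icc]
        simp [cycMoment_zero_right]
      have hsub1 : k + 1 - 1 = k := rfl
      have hsub2 : k + 1 + 1 - 1 = k + 1 := rfl
      rw [hsub1] at hIH
      rw [hsub2]
      have htop : ∑ r ∈ Finset.Icc 1 s, ∑ j ∈ Finset.Icc 1 (k + 1),
            (s.choose r : ℝ) * cycMoment j r
          = (∑ r ∈ Finset.Icc 1 s, ∑ j ∈ Finset.Icc 1 k,
              (s.choose r : ℝ) * cycMoment j r)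
            + ∑ r ∈ Finset.Icc 1 s, (s.choose r : ℝ) * cycMoment (k + 1) r := by
        rw [Finset.sum_congr rfl fun r _ =>
          Finset.sum_Icc_succ_top (by omega : 1 ≤ k + 1) _]
        rw [Finset.sum_add_distrib]
      rw [htop]
      rw [hsplit] at hstep
      push_cast at hIH hstep ⊢
      linarith

/-- Recursion for the cycle moments:
`μ_{n,s} = 1 + (1/n) ∑_{r=1}^{s} ∑_{j=1}^{n-1} C(s,r) μ_{j,r}`. -/
theorem cycMoment_recursion (n s : ℕ) (hn : 1 ≤ n) (hs : 1 ≤ s) :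
    cycMoment n s = 1 + (1 / n : ℝ) *
      ∑ r ∈ Finset.Icc 1 s, ∑ j ∈ Finset.Icc 1 (n - 1),
        (s.choose r : ℝ) * cycMoment j r := by
  have h := cycMoment_cumulative s n hn
  have hn0 : (n : ℝ) ≠ 0 := Nat.cast_ne_zero.mpr (by omega)
  field_simp
  linarith [h]
end

section
/- The sequence M_n := H_n − Σ_{i=1}^{n} 1/i² is the unique sequence satisfying a_1 = 0 and a_n = 1 + (1/n) Σ_{i=1}^{n-1} a_i − H_n/n for all n ≥ 2, where H_n = Σ_{j=1}^{n} 1/j. -/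
/-- `H_n`, the `n`-th harmonic number. -/
noncomputable def harmonicNum (n : ℕ) : ℝ := ∑ j ∈ Finset.Icc 1 n, (1 : ℝ) / j

/-- `M_n := H_n − ∑_{i=1}^n 1/i²`. -/
noncomputable def Mseq (n : ℕ) : ℝ :=
  harmonicNum n - ∑ i ∈ Finset.Icc 1 n, (1 : ℝ) / (i : ℝ) ^ 2

noncomputable def Sq (n : ℕ) : ℝ := ∑ i ∈ Finset.Icc 1 n, (1 : ℝ) / (i : ℝ) ^ 2

lemma harmonicNum_succ (m : ℕ) : harmonicNum (m + 1) = harmonicNum m + 1 / (m + 1 : ℝ) := by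
  unfold harmonicNum
  rw [Finset.sum_Icc_succ_top (by omega : 1 ≤ m + 1)]
  push_cast; ring

lemma Sq_succ (m : ℕ) : Sq (m + 1) = Sq m + 1 / ((m : ℝ) + 1) ^ 2 := by
  unfold Sq
  rw [Finset.sum_Icc_succ_top (by omega : 1 ≤ m + 1)]
  push_cast; ring

lemma sum_harmonic (m : ℕ) :
    ∑ i ∈ Finset.Icc 1 m, harmonicNum i = (m + 1 : ℝ) * harmonicNum m - m := by
  induction m with
  | zero => simp [harmonicNum]
  | succ m ih =>
    rw [Finset.sum_Icc_succ_top (by omega : 1 ≤ m + 1), ih, harmonicNum_succ]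
    push_cast
    field_simp
    ring

lemma sum_Sq (m : ℕ) :
    ∑ i ∈ Finset.Icc 1 m, Sq i = (m + 1 : ℝ) * Sq m - harmonicNum m := by
  induction m with
  | zero => simp [Sq, harmonicNum]
  | succ m ih =>
    rw [Finset.sum_Icc_succ_top (by omega : 1 ≤ m + 1), ih, Sq_succ, harmonicNum_succ]
    push_cast
    field_simp
    ring

/-- `M_n = H_n − ∑_{i=1}^n 1/i²` is the unique sequence satisfying `a_1 = 0` and
`a_n = 1 + (1/n) ∑_{i=1}^{n-1} a_i − H_n/n` for all `n ≥ 2`. -/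
theorem Mseq_unique_recursion :
    (Mseq 1 = 0 ∧
      ∀ n : ℕ, 2 ≤ n →
        Mseq n = 1 + (1 / n : ℝ) * ∑ i ∈ Finset.Icc 1 (n - 1), Mseq i
          - harmonicNum n / n) ∧
    ∀ a : ℕ → ℝ, a 1 = 0 →
      (∀ n : ℕ, 2 ≤ n →
        a n = 1 + (1 / n : ℝ) * ∑ i ∈ Finset.Icc 1 (n - 1), a i - harmonicNum n / n) →
      ∀ n : ℕ, 1 ≤ n → a n = Mseq n := by
  have hM1 : Mseq 1 = 0 := by
    simp [Mseq, harmonicNum]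
  have hrec : ∀ n : ℕ, 2 ≤ n →
      Mseq n = 1 + (1 / n : ℝ) * ∑ i ∈ Finset.Icc 1 (n - 1), Mseq i
        - harmonicNum n / n := by
    intro n hn
    obtain ⟨m, rfl⟩ : ∃ m, n = m + 1 := ⟨n - 1, by omega⟩
    have hm : 1 ≤ m := by omega
    have hsum : ∑ i ∈ Finset.Icc 1 (m + 1 - 1), Mseq i
        = (m + 1 : ℝ) * harmonicNum m - m - ((m + 1 : ℝ) * Sq m - harmonicNum m) := by
      simp only [Nat.add_sub_cancel]
      have : ∀ i, Mseq i = harmonicNum i - Sq i := fun i => rfl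
      simp only [this, Finset.sum_sub_distrib, sum_harmonic, sum_Sq]
    rw [hsum]
    have hMn : Mseq (m + 1) = harmonicNum m + 1 / ((m : ℝ) + 1)
        - (Sq m + 1 / ((m : ℝ) + 1) ^ 2) := by
      show harmonicNum (m + 1) - Sq (m + 1) = _
      rw [harmonicNum_succ, Sq_succ]
    rw [hMn, harmonicNum_succ]
    have hne : ((m : ℝ) + 1) ≠ 0 := by positivity
    push_cast
    field_simp
    ring
  refine ⟨⟨hM1, hrec⟩, ?_⟩
  intro a ha1 harec n hn
  induction n using Nat.strong_induction_on with
  | _ n ih =>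
    rcases eq_or_lt_of_le hn with h | h
    · rw [← h, ha1, hM1]
    · have h2 : 2 ≤ n := h
      rw [harec n h2, hrec n h2]
      congr 1
      congr 1
      congr 1
      apply Finset.sum_congr rfl
      intro i hi
      simp only [Finset.mem_Icc] at hi
      exact ih i (by omega) hi.1
end

section
/- Let d = 2, 0 < ε < 1, and for each m let b_m be the minimum size of an ε-representative code of {1,...,m}² under a weight function w with values in [1,β] defined on all of ℕ², satisfying the coordinatewise monotonicity: if u and v differ only in one coordinate and u has the larger coordinate, then w(u) ≤ w(v). Then for m = kr + s with 0 ≤ s ≤ r−1 one has b_m ≤ k²·b_r + (2k+1)·r². -/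
/-- The square grid `{1,…,m}² ⊆ ℕ²`. -/
def grid (m : ℕ) : Finset (ℕ × ℕ) := Finset.Icc 1 m ×ˢ Finset.Icc 1 m

/-- `B` is an `ε`-representative code of the grid `{1,…,m}²` for the weight
function `w`: `B ⊆ {1,…,m}²` and `B` meets every subset of the grid of total
weight at least `ε m²`. -/
def IsGridRep (w : ℕ × ℕ → ℝ) (ε : ℝ) (m : ℕ) (B : Finset (ℕ × ℕ)) : Prop :=
  B ⊆ grid m ∧
    ∀ U ⊆ grid m, ε * (m : ℝ) ^ 2 ≤ ∑ v ∈ U, w v → (B ∩ U).Nonempty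

/-- `b_m`: the minimum size of an `ε`-representative code of `{1,…,m}²`. -/
noncomputable def minRep (w : ℕ × ℕ → ℝ) (ε : ℝ) (m : ℕ) : ℕ :=
  sInf {c : ℕ | ∃ B : Finset (ℕ × ℕ), IsGridRep w ε m B ∧ B.card = c}


lemma mem_grid {n : ℕ} {v : ℕ × ℕ} :
    v ∈ grid n ↔ 1 ≤ v.1 ∧ v.1 ≤ n ∧ 1 ≤ v.2 ∧ v.2 ≤ n := by
  simp [grid, Finset.mem_Icc, and_assoc]

lemma grid_subset {a b : ℕ} (h : a ≤ b) : grid a ⊆ grid b := by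
  intro v hv
  rw [mem_grid] at hv ⊢
  omega

lemma card_grid (n : ℕ) : (grid n).card = n ^ 2 := by
  simp [grid, Nat.card_Icc, sq]

lemma grid_isRep {w : ℕ × ℕ → ℝ} {ε : ℝ} (hε0 : 0 < ε) {n : ℕ} (hn : 1 ≤ n) :
    IsGridRep w ε n (grid n) := by
  refine ⟨subset_rfl, fun U hU hsum => ?_⟩
  rw [Finset.inter_eq_right.mpr hU]
  rcases U.eq_empty_or_nonempty with h | h
  · exfalso
    rw [h, Finset.sum_empty] at hsum
    have hn' : (1 : ℝ) ≤ (n : ℝ) := by exact_mod_cast hn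
    have hn2 : (1 : ℝ) ≤ (n : ℝ) ^ 2 := by nlinarith
    nlinarith
  · exact h

/-- For a coordinatewise non-increasing weight function with values in `[1,β]`
and `m = k r + s` with `0 ≤ s ≤ r − 1`, `b_m ≤ k² b_r + (2k+1) r²`. -/
theorem minRep_subadditive (β ε : ℝ) (hβ : 1 ≤ β) (hε0 : 0 < ε) (hε1 : ε < 1)
    (w : ℕ × ℕ → ℝ) (hw : ∀ v, 1 ≤ w v ∧ w v ≤ β)
    (hmono1 : ∀ x x' y : ℕ, x ≤ x' → w (x', y) ≤ w (x, y))
    (hmono2 : ∀ x y y' : ℕ, y ≤ y' → w (x, y') ≤ w (x, y))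
    (k r s : ℕ) (hk : 1 ≤ k) (hr : 1 ≤ r) (hs : s ≤ r - 1) :
    minRep w ε (k * r + s) ≤ k ^ 2 * minRep w ε r + (2 * k + 1) * r ^ 2 := by
  set m := k * r + s with hm
  have hkrm : k * r ≤ m := by omega
  -- optimal code for r
  obtain ⟨Br, hBr, hBrcard⟩ :
      ∃ B, IsGridRep w ε r B ∧ B.card = minRep w ε r :=
    Nat.sInf_mem (s := {c : ℕ | ∃ B, IsGridRep w ε r B ∧ B.card = c})
      ⟨(grid r).card, grid r, grid_isRep hε0 hr, rfl⟩
  set K : Finset (ℕ × ℕ) := Finset.range k ×ˢ Finset.range k with hK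
  set φ : ℕ × ℕ → ℕ × ℕ → ℕ × ℕ := fun ab p => (p.1 + ab.1 * r, p.2 + ab.2 * r) with hφ
  set Bm : Finset (ℕ × ℕ) :=
    K.biUnion (fun ab => Br.image (φ ab)) ∪ (grid m \ grid (k * r)) with hBm
  have memK : ∀ ab : ℕ × ℕ, ab ∈ K ↔ ab.1 < k ∧ ab.2 < k := by
    intro ab; simp [hK]
  have hrep : IsGridRep w ε m Bm := by
    constructor
    · intro p hp
      rw [hBm, Finset.mem_union] at hp
      rcases hp with hp | hp
      · rw [Finset.mem_biUnion] at hp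
        obtain ⟨ab, habK, hp⟩ := hp
        rw [Finset.mem_image] at hp
        obtain ⟨q, hq, rfl⟩ := hp
        have hq' := mem_grid.mp (hBr.1 hq)
        rw [memK] at habK
        rw [mem_grid]
        simp only [hφ]
        constructor
        · omega
        constructor
        · have : q.1 + ab.1 * r ≤ r + (k - 1) * r := by
            have : ab.1 * r ≤ (k - 1) * r := Nat.mul_le_mul_right r (by omega)
            omega
          have : r + (k - 1) * r = k * r := by
            cases k with
            | zero => omega
            | succ k' => simp [Nat.succ_mul]; ring
          omega
        constructor
        · omega
        · have h1 : ab.2 * r ≤ (k - 1) * r := Nat.mul_le_mul_right r (by omega)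
          have h2 : r + (k - 1) * r = k * r := by
            cases k with
            | zero => omega
            | succ k' => simp [Nat.succ_mul]; ring
          omega
      · exact (Finset.mem_sdiff.mp hp).1
    · intro U hU hsum
      by_cases hbd : (U ∩ (grid m \ grid (k * r))).Nonempty
      · obtain ⟨v, hv⟩ := hbd
        rw [Finset.mem_inter] at hv
        exact ⟨v, Finset.mem_inter.mpr
          ⟨Finset.mem_union_right _ hv.2, hv.1⟩⟩
      · have hUsub : U ⊆ grid (k * r) := by
          intro v hv
          by_contra h
          exact hbd ⟨v, Finset.mem_inter.mpr ⟨hv,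
            Finset.mem_sdiff.mpr ⟨hU hv, h⟩⟩⟩
        set g : ℕ × ℕ → ℕ × ℕ := fun v => ((v.1 - 1) / r, (v.2 - 1) / r) with hg
        have hmaps : ∀ v ∈ U, g v ∈ K := by
          intro v hv
          have hv' := mem_grid.mp (hUsub hv)
          rw [memK]
          constructor
          · apply Nat.div_lt_of_lt_mul
            have : v.1 - 1 < k * r := by omega
            calc v.1 - 1 < k * r := this
            _ = r * k := by ring
          · apply Nat.div_lt_of_lt_mul
            have : v.2 - 1 < k * r := by omega
            calc v.2 - 1 < k * r := this
            _ = r * k := by ring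
        have hsplit :
            ∑ ab ∈ K, ∑ v ∈ U.filter (fun v => g v = ab), w v = ∑ v ∈ U, w v :=
          Finset.sum_fiberwise_of_maps_to hmaps w
        have hexists :
            ∃ ab ∈ K, ε * (r : ℝ) ^ 2 ≤ ∑ v ∈ U.filter (fun v => g v = ab), w v := by
          by_contra h
          push_neg at h
          have hKne : K.Nonempty := ⟨(0, 0), by rw [memK]; omega⟩
          have hlt : ∑ v ∈ U, w v < ∑ _ab ∈ K, ε * (r : ℝ) ^ 2 := by
            rw [← hsplit]
            exact Finset.sum_lt_sum_of_nonempty hKne (fun ab hab => h ab hab)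
          rw [Finset.sum_const] at hlt
          have hKcard : K.card = k * k := by simp [hK]
          rw [hKcard, nsmul_eq_mul] at hlt
          have hmlb : ((k : ℝ) * r) ^ 2 ≤ (m : ℝ) ^ 2 := by
            have h1 : ((k * r : ℕ) : ℝ) ≤ (m : ℝ) := by exact_mod_cast hkrm
            push_cast at h1
            have h0 : (0 : ℝ) ≤ (k : ℝ) * r := by positivity
            nlinarith [mul_le_mul h1 h1 h0 (le_trans h0 h1)]
          have : ε * ((k : ℝ) * r) ^ 2 ≤ ε * (m : ℝ) ^ 2 :=
            mul_le_mul_of_nonneg_left hmlb hε0.le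
          have hfinal : (↑(k * k) : ℝ) * (ε * (r : ℝ) ^ 2) = ε * ((k : ℝ) * r) ^ 2 := by
            push_cast; ring
          rw [hfinal] at hlt
          linarith
        obtain ⟨ab, habK, habsum⟩ := hexists
        obtain ⟨a, b⟩ := ab
        rw [memK] at habK
        set U' : Finset (ℕ × ℕ) := U.filter (fun v => g v = (a, b)) with hU'
        have hmemU' : ∀ v ∈ U', a * r + 1 ≤ v.1 ∧ v.1 ≤ a * r + r ∧
            b * r + 1 ≤ v.2 ∧ v.2 ≤ b * r + r := by
          intro v hv
          rw [hU', Finset.mem_filter] at hv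
          have hvg := mem_grid.mp (hUsub hv.1)
          have he : (v.1 - 1) / r = a ∧ (v.2 - 1) / r = b := by
            have := hv.2
            simp [hg, Prod.ext_iff] at this
            exact this
          have hd1 := Nat.div_add_mod (v.1 - 1) r
          have hd2 := Nat.div_add_mod (v.2 - 1) r
          have hm1 := Nat.mod_lt (v.1 - 1) (show 0 < r by omega)
          have hm2 := Nat.mod_lt (v.2 - 1) (show 0 < r by omega)
          rw [he.1] at hd1
          rw [he.2] at hd2
          rw [mul_comm r a] at hd1
          rw [mul_comm r b] at hd2
          omega
        set ψ : ℕ × ℕ → ℕ × ℕ := fun v => (v.1 - a * r, v.2 - b * r) with hψ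
        set U'' : Finset (ℕ × ℕ) := U'.image ψ with hU''
        have hinj : Set.InjOn ψ U' := by
          intro v hv v' hv' heq
          have h1 := hmemU' v hv
          have h2 := hmemU' v' hv'
          simp [hψ, Prod.ext_iff] at heq
          ext <;> omega
        have hUsub'' : U'' ⊆ grid r := by
          intro u hu
          rw [hU'', Finset.mem_image] at hu
          obtain ⟨v, hv, rfl⟩ := hu
          have := hmemU' v hv
          rw [mem_grid]
          simp only [hψ]
          omega
        have hsum'' : ε * (r : ℝ) ^ 2 ≤ ∑ u ∈ U'', w u := by
          rw [hU'', Finset.sum_image hinj]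
          refine le_trans habsum (Finset.sum_le_sum fun v hv => ?_)
          have hb := hmemU' v hv
          have h1 : w (v.1, v.2) ≤ w (v.1 - a * r, v.2) :=
            hmono1 (v.1 - a * r) v.1 v.2 (by omega)
          have h2 : w (v.1 - a * r, v.2) ≤ w (v.1 - a * r, v.2 - b * r) :=
            hmono2 (v.1 - a * r) (v.2 - b * r) v.2 (by omega)
          calc w v = w (v.1, v.2) := by rfl
          _ ≤ w (v.1 - a * r, v.2 - b * r) := le_trans h1 h2
          _ = w (ψ v) := by rfl
        obtain ⟨q, hq⟩ := hBr.2 U'' hUsub'' hsum''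
        rw [Finset.mem_inter] at hq
        obtain ⟨hqB, hqU⟩ := hq
        rw [hU'', Finset.mem_image] at hqU
        obtain ⟨v, hvU', hvq⟩ := hqU
        have hvb := hmemU' v hvU'
        have hvU : v ∈ U := (Finset.filter_subset _ _) hvU'
        refine ⟨v, Finset.mem_inter.mpr ⟨?_, hvU⟩⟩
        rw [hBm]
        apply Finset.mem_union_left
        rw [Finset.mem_biUnion]
        refine ⟨(a, b), by rw [memK]; exact habK, ?_⟩
        rw [Finset.mem_image]
        refine ⟨q, hqB, ?_⟩
        have : φ (a, b) (ψ v) = v := by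
          simp only [hφ, hψ]
          ext <;> simp <;> omega
        rw [← hvq, this]
  have hcard : Bm.card ≤ k ^ 2 * minRep w ε r + (2 * k + 1) * r ^ 2 := by
    have h1 : Bm.card ≤ (K.biUnion (fun ab => Br.image (φ ab))).card
        + (grid m \ grid (k * r)).card := Finset.card_union_le _ _
    have h2 : (K.biUnion (fun ab => Br.image (φ ab))).card
        ≤ ∑ ab ∈ K, (Br.image (φ ab)).card := Finset.card_biUnion_le
    have h3 : ∑ ab ∈ K, (Br.image (φ ab)).card ≤ ∑ _ab ∈ K, Br.card :=
      Finset.sum_le_sum fun ab _ => Finset.card_image_le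
    have h4 : ∑ _ab ∈ K, Br.card = k ^ 2 * minRep w ε r := by
      rw [Finset.sum_const, smul_eq_mul]
      have : K.card = k * k := by simp [hK]
      rw [this, hBrcard, sq]
    have h5 : (grid m \ grid (k * r)).card ≤ (2 * k + 1) * r ^ 2 := by
      rw [Finset.card_sdiff_of_subset (grid_subset hkrm), card_grid, card_grid]
      have hsr : s + 1 ≤ r := by omega
      have : m ^ 2 ≤ (2 * k + 1) * r ^ 2 + (k * r) ^ 2 := by
        rw [hm]
        have h6 : k * r * s ≤ k * r * r := Nat.mul_le_mul_left _ (by omega)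
        have h7 : s * s ≤ r * r := Nat.mul_le_mul (by omega) (by omega)
        nlinarith [h6, h7]
      omega
    omega
  have hle : minRep w ε m ≤ Bm.card := Nat.sInf_le ⟨Bm, hrep, rfl⟩
  omega
end

section
/- Let (b_m)_{m≥1} be a sequence of nonnegative reals such that for all r ≥ 1 and all m = kr + s with k ≥ 1, 0 ≤ s ≤ r−1, one has b_m ≤ k² b_r + (2k+1) r². Then b_m/m² converges as m → ∞ to inf_r b_r/r². -/
/-- Fekete-type convergence: if a nonnegative sequence satisfies
`b_{kr+s} ≤ k² b_r + (2k+1) r²` for all `r ≥ 1`, `k ≥ 1`, `0 ≤ s ≤ r−1`,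
then `b_m/m²` converges to `inf_{r ≥ 1} b_r/r²`. -/
theorem subadditive_convergence (b : ℕ → ℝ) (hb0 : ∀ m, 0 ≤ b m)
    (hsub : ∀ r k s : ℕ, 1 ≤ r → 1 ≤ k → s ≤ r - 1 →
      b (k * r + s) ≤ (k : ℝ) ^ 2 * b r + (2 * k + 1) * (r : ℝ) ^ 2) :
    Filter.Tendsto (fun m : ℕ => b m / (m : ℝ) ^ 2) Filter.atTop
      (nhds (⨅ r : ℕ, b (r + 1) / ((r : ℝ) + 1) ^ 2)) := by
  set L := ⨅ r : ℕ, b (r + 1) / ((r : ℝ) + 1) ^ 2 with hL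
  have hBdd : BddBelow (Set.range fun r : ℕ => b (r + 1) / ((r : ℝ) + 1) ^ 2) := by
    refine ⟨0, ?_⟩
    rintro x ⟨i, rfl⟩
    have := hb0 (i + 1)
    positivity
  have hlow : ∀ m : ℕ, 1 ≤ m → L ≤ b m / (m : ℝ) ^ 2 := by
    intro m hm
    obtain ⟨n, rfl⟩ := Nat.exists_eq_add_of_le hm
    have := ciInf_le hBdd n
    rw [hL, show 1 + n = n + 1 by omega]
    convert this using 2
    · rfl
    · push_cast
      ring
  rw [Metric.tendsto_atTop]
  intro ε hε
  have hLlt : L < L + ε / 2 := by linarith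
  obtain ⟨i, hi⟩ := exists_lt_of_ciInf_lt hLlt
  set r := i + 1 with hr
  have hr1 : 1 ≤ r := Nat.le_add_left 1 i
  have hrpos : (0 : ℝ) < (r : ℝ) := by positivity
  have hir : b r / (r : ℝ) ^ 2 < L + ε / 2 := by
    have : ((i : ℝ) + 1) = (r : ℝ) := by push_cast [hr]; ring
    rwa [this] at hi
  set K := ⌈6 / ε⌉₊ + 1 with hK
  have hK1 : 1 ≤ K := Nat.le_add_left 1 _
  have hKgt : 6 / ε < (K : ℝ) := by
    have h1 : 6 / ε ≤ (⌈6 / ε⌉₊ : ℝ) := Nat.le_ceil _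
    have h2 : ((⌈6 / ε⌉₊ : ℕ) : ℝ) < (K : ℝ) := by exact_mod_cast Nat.lt_succ_self _
    linarith
  have hKpos : (0 : ℝ) < (K : ℝ) := by positivity
  have h3K : 3 / (K : ℝ) < ε / 2 := by
    rw [div_lt_iff₀ hKpos]
    have : 6 < ε * K := by
      have := (div_lt_iff₀ hε).mp hKgt
      linarith [mul_comm ε (K : ℝ)]
    nlinarith
  refine ⟨r * K, fun m hm => ?_⟩
  set k := m / r with hk
  set s := m % r with hs
  have hkK : K ≤ k := by
    rw [hk, Nat.le_div_iff_mul_le (by omega : 0 < r)]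
    calc K * r = r * K := by ring
    _ ≤ m := hm
  have hk1 : 1 ≤ k := le_trans hK1 hkK
  have hsr : s ≤ r - 1 := by
    have := Nat.mod_lt m (by omega : 0 < r)
    omega
  have hm_eq : m = k * r + s := by
    rw [hk, hs, Nat.mul_comm]
    exact (Nat.div_add_mod m r).symm
  have hm1 : 1 ≤ m := by
    have : k * r ≤ m := by omega
    nlinarith
  have hmpos : (0 : ℝ) < (m : ℝ) := by exact_mod_cast Nat.pos_of_ne_zero (by omega)
  have hkpos : (0 : ℝ) < (k : ℝ) := by exact_mod_cast hk1
  have hkr_le : (k : ℝ) * (r : ℝ) ≤ (m : ℝ) := by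
    have : k * r ≤ m := by omega
    exact_mod_cast this
  have hkrpos : (0 : ℝ) < (k : ℝ) * (r : ℝ) := by positivity
  have hbm : b m ≤ (k : ℝ) ^ 2 * b r + (2 * k + 1) * (r : ℝ) ^ 2 := by
    rw [hm_eq]; exact hsub r k s hr1 hk1 hsr
  have hnum_nonneg : 0 ≤ (k : ℝ) ^ 2 * b r + (2 * k + 1) * (r : ℝ) ^ 2 := by
    have := hb0 r; positivity
  have h1 : b m / (m : ℝ) ^ 2 ≤ ((k : ℝ) ^ 2 * b r + (2 * k + 1) * (r : ℝ) ^ 2) / (m : ℝ) ^ 2 := by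
    gcongr
  have h2 : ((k : ℝ) ^ 2 * b r + (2 * k + 1) * (r : ℝ) ^ 2) / (m : ℝ) ^ 2
      ≤ ((k : ℝ) ^ 2 * b r + (2 * k + 1) * (r : ℝ) ^ 2) / ((k : ℝ) * (r : ℝ)) ^ 2 := by
    gcongr
  have h3 : ((k : ℝ) ^ 2 * b r + (2 * k + 1) * (r : ℝ) ^ 2) / ((k : ℝ) * (r : ℝ)) ^ 2
      = b r / (r : ℝ) ^ 2 + (2 * (k : ℝ) + 1) / (k : ℝ) ^ 2 := by
    field_simp
  have h4 : (2 * (k : ℝ) + 1) / (k : ℝ) ^ 2 ≤ 3 / (k : ℝ) := by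
    rw [div_le_div_iff₀ (by positivity) hkpos]
    have hk1' : (1 : ℝ) ≤ (k : ℝ) := by exact_mod_cast hk1
    nlinarith
  have h5 : 3 / (k : ℝ) ≤ 3 / (K : ℝ) := by
    have : (K : ℝ) ≤ (k : ℝ) := by exact_mod_cast hkK
    gcongr
  have hupper : b m / (m : ℝ) ^ 2 < L + ε := by
    calc b m / (m : ℝ) ^ 2 ≤ b r / (r : ℝ) ^ 2 + (2 * (k : ℝ) + 1) / (k : ℝ) ^ 2 := by
          rw [← h3]; exact le_trans h1 h2
    _ ≤ b r / (r : ℝ) ^ 2 + 3 / (K : ℝ) := by linarith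
    _ < (L + ε / 2) + ε / 2 := by linarith
    _ = L + ε := by ring
  have hlow' := hlow m hm1
  rw [Real.dist_eq, abs_lt]
  exact ⟨by linarith, by linarith⟩
end
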